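/- For all integers n, m ≥ 2, the complete bipartite graph K_{n,m} has an SOCDC. -/

import Mathlib

open SimpleGraph

/-- The list of arcs of a cyclically-read list of vertices:
`[(l₀,l₁), (l₁,l₂), …, (lₙ₋₁,l₀)]`. -/
def cycleArcs {V : Type*} (l : List V) : List (V × V) := l.zip (l.rotate 1)

/-- `l` represents a directed cycle of the symmetric orientation of `G`:
a cyclic sequence of at least three pairwise distinct vertices with consecutive
vertices adjacent (cyclically). -/
def IsDirCycle {V : Type*} (G : SimpleGraph V) (l : List V) : Prop :=
  3 ≤ l.length ∧ l.Nodup ∧ ∀ p ∈ cycleArcs l, G.Adj p.1 p.2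

/-- An oriented cycle double cover of `G` : a collection of directed cycles of the
symmetric orientation of `G` such that each arc `(u,v)` (with `u ~ v` in `G`) lies
in exactly one of the cycles. -/
def IsOCDC {V : Type*} (G : SimpleGraph V) (C : Finset (List V)) : Prop :=
  (∀ l ∈ C, IsDirCycle G l) ∧
    ∀ u v : V, G.Adj u v → ∃! l : List V, l ∈ C ∧ (u, v) ∈ cycleArcs l

/-- `G` (a graph with vertex set of size `n`) has a small oriented cycle double cover:
an OCDC with at most `n - 1` directed cycles. -/
def HasSOCDC {V : Type*} (G : SimpleGraph V) : Prop :=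
  ∃ C : Finset (List V), IsOCDC G C ∧ C.card ≤ Nat.card V - 1

/-- `l` represents a directed path of the symmetric orientation of `G`. -/
def IsDirPath {V : Type*} (G : SimpleGraph V) (l : List V) : Prop :=
  l ≠ [] ∧ l.Nodup ∧ l.Chain' G.Adj

/-- An oriented perfect path double cover of `G`: a collection of directed paths of the
symmetric orientation of `G` such that each arc lies in exactly one path, and every
vertex occurs exactly once as the start and exactly once as the end of a path. -/
def IsOPPDC {V : Type*} (G : SimpleGraph V) (P : Finset (List V)) : Prop :=
  (∀ l ∈ P, IsDirPath G l) ∧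
    (∀ u v : V, G.Adj u v → ∃! l : List V, l ∈ P ∧ (u, v) ∈ l.zip l.tail) ∧
    (∀ v : V, ∃! l : List V, l ∈ P ∧ l.head? = some v) ∧
    (∀ v : V, ∃! l : List V, l ∈ P ∧ l.getLast? = some v)

-- auxiliary lemmas

lemma mem_cycleArcs_iff {V : Type*} (l : List V) (p : V × V) :
    p ∈ cycleArcs l ↔ ∃ k, ∃ h : k < l.length,
      p = (l[k], l[(k+1) % l.length]'(Nat.mod_lt _ (by omega))) := by
  unfold cycleArcs
  rw [List.mem_iff_getElem]
  constructor
  · rintro ⟨k, hk, hp⟩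
    have hk' : k < l.length := by simpa using hk
    refine ⟨k, hk', ?_⟩
    rw [← hp]
    simp [List.getElem_zip, List.getElem_rotate]
  · rintro ⟨k, hk, hp⟩
    refine ⟨k, by simpa using hk, ?_⟩
    rw [hp]
    simp [List.getElem_zip, List.getElem_rotate]

lemma mem_cycleArcs_range {V : Type*} {N : ℕ} (g : ℕ → V) (p : V × V) :
    p ∈ cycleArcs ((List.range N).map g) ↔ ∃ k < N, p = (g k, g ((k+1) % N)) := by
  rw [mem_cycleArcs_iff]
  simp

lemma cycleArcs_map {V W : Type*} (f : V → W) (l : List V) :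
    cycleArcs (l.map f) = (cycleArcs l).map (Prod.map f f) := by
  unfold cycleArcs
  rw [← List.map_rotate, List.zip_map]

lemma hasSOCDC_of_iso {V W : Type*} {G : SimpleGraph V} {H : SimpleGraph W} (e : G ≃g H)
    (hG : HasSOCDC G) : HasSOCDC H := by
  classical
  obtain ⟨C, ⟨hcyc, hcov⟩, hcard⟩ := hG
  have einj : Function.Injective (e : V → W) := e.toEquiv.injective
  refine ⟨C.image (List.map (e : V → W)), ⟨?_, ?_⟩, ?_⟩
  · intro l hl
    simp only [Finset.mem_image] at hl
    obtain ⟨l', hl', rfl⟩ := hl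
    obtain ⟨h1, h2, h3⟩ := hcyc l' hl'
    refine ⟨by rw [List.length_map]; exact h1, h2.map einj, ?_⟩
    intro p hp
    rw [cycleArcs_map] at hp
    obtain ⟨q, hq, rfl⟩ := List.mem_map.1 hp
    exact e.map_rel_iff.2 (h3 q hq)
  · intro u v huv
    have huv' : G.Adj (e.symm u) (e.symm v) := by
      have := e.symm.map_rel_iff.2 huv
      simpa using this
    obtain ⟨l, ⟨hlC, hlmem⟩, huniq⟩ := hcov _ _ huv'
    have key : ∀ l' : List V, (u, v) ∈ cycleArcs (l'.map (e : V → W)) ↔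
        (e.symm u, e.symm v) ∈ cycleArcs l' := by
      intro l'
      rw [cycleArcs_map]
      constructor
      · intro h
        obtain ⟨q, hq, hq2⟩ := List.mem_map.1 h
        have h1 : (e : V → W) q.1 = u := congrArg Prod.fst hq2
        have h2 : (e : V → W) q.2 = v := congrArg Prod.snd hq2
        have : q = (e.symm u, e.symm v) := by
          ext
          · simp [← h1]
          · simp [← h2]
        rwa [← this]
      · intro h
        refine List.mem_map.2 ⟨_, h, ?_⟩
        simp [Prod.map]
    refine ⟨l.map (e : V → W), ⟨Finset.mem_image_of_mem _ hlC, (key l).2 hlmem⟩, ?_⟩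
    rintro l' ⟨hl'C, hl'mem⟩
    obtain ⟨l'', hl'', rfl⟩ := Finset.mem_image.1 hl'C
    rw [key l''] at hl'mem
    rw [huniq l'' ⟨hl'', hl'mem⟩]
  · calc (C.image _).card ≤ C.card := Finset.card_image_le
      _ ≤ Nat.card V - 1 := hcard
      _ = Nat.card W - 1 := by rw [Nat.card_congr e.toEquiv]

def bip (n m c : ℕ) (hn : 0 < n) (hm : 0 < m) (k : ℕ) : Fin n ⊕ Fin m :=
  if k % 2 = 0 then Sum.inl ⟨k / 2 % n, Nat.mod_lt _ hn⟩
  else Sum.inr ⟨(c + k / 2) % m, Nat.mod_lt _ hm⟩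

lemma bip_even {n m c : ℕ} (hn : 0 < n) (hm : 0 < m) {k : ℕ} (h : k % 2 = 0) :
    bip n m c hn hm k = Sum.inl ⟨k / 2 % n, Nat.mod_lt _ hn⟩ := if_pos h

lemma bip_odd {n m c : ℕ} (hn : 0 < n) (hm : 0 < m) {k : ℕ} (h : ¬ (k % 2 = 0)) :
    bip n m c hn hm k = Sum.inr ⟨(c + k / 2) % m, Nat.mod_lt _ hm⟩ := if_neg h

def bipL (n m c : ℕ) (hn : 0 < n) (hm : 0 < m) : List (Fin n ⊕ Fin m) :=
  (List.range (2*n)).map (bip n m c hn hm)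

lemma bipL_length (n m c : ℕ) (hn : 0 < n) (hm : 0 < m) :
    (bipL n m c hn hm).length = 2 * n := by simp [bipL]

lemma mem_cycleArcs_bipL (n m c : ℕ) (hn : 0 < n) (hm : 0 < m) (p : (Fin n ⊕ Fin m) × (Fin n ⊕ Fin m)) :
    p ∈ cycleArcs (bipL n m c hn hm) ↔
      ∃ k < 2*n, p = (bip n m c hn hm k, bip n m c hn hm ((k+1) % (2*n))) := by
  exact mem_cycleArcs_range _ _

lemma aux_socdc (n m : ℕ) (hn : 2 ≤ n) (hnm : n ≤ m) :
    HasSOCDC (completeBipartiteGraph (Fin n) (Fin m)) := by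
  have hn0 : 0 < n := by omega
  have hm0 : 0 < m := by omega
  have hkey : ∀ (t j : ℕ), t < n → j < m → ((m + j - t) % m + t) % m = j := by
    intro t j ht hj
    rw [Nat.mod_add_mod]
    have h2 : m + j - t + t = m + j := by omega
    rw [h2, Nat.add_mod_left, Nat.mod_eq_of_lt hj]
  have hcancel : ∀ (t c c' : ℕ), c < m → c' < m → (c + t) % m = (c' + t) % m → c = c' := by
    intro t c c' hc hc' h
    have h2 : c % m = c' % m := Nat.ModEq.add_right_cancel' t h
    rwa [Nat.mod_eq_of_lt hc, Nat.mod_eq_of_lt hc'] at h2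
  refine ⟨(Finset.range m).image (fun c => bipL n m c hn0 hm0), ⟨?_, ?_⟩, ?_⟩
  · -- each bipL is a directed cycle
    intro l hl
    obtain ⟨c, _, rfl⟩ := Finset.mem_image.1 hl
    refine ⟨by rw [bipL_length]; omega, ?_, ?_⟩
    · refine List.nodup_range.map_on ?_
      intro x hx y hy hxy
      rw [List.mem_range] at hx hy
      by_cases hx2 : x % 2 = 0 <;> by_cases hy2 : y % 2 = 0
      · rw [bip_even hn0 hm0 hx2, bip_even hn0 hm0 hy2] at hxy
        simp only [Sum.inl.injEq, Fin.mk.injEq] at hxy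
        rw [Nat.mod_eq_of_lt (by omega), Nat.mod_eq_of_lt (by omega)] at hxy
        omega
      · rw [bip_even hn0 hm0 hx2, bip_odd hn0 hm0 hy2] at hxy
        simp at hxy
      · rw [bip_odd hn0 hm0 hx2, bip_even hn0 hm0 hy2] at hxy
        simp at hxy
      · rw [bip_odd hn0 hm0 hx2, bip_odd hn0 hm0 hy2] at hxy
        simp only [Sum.inr.injEq, Fin.mk.injEq] at hxy
        have h3 : x / 2 % m = y / 2 % m := Nat.ModEq.add_left_cancel' c hxy
        rw [Nat.mod_eq_of_lt (by omega), Nat.mod_eq_of_lt (by omega)] at h3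
        omega
    · intro p hp
      rw [mem_cycleArcs_bipL] at hp
      obtain ⟨k, hk, rfl⟩ := hp
      by_cases hk2 : k % 2 = 0
      · have e1 : (k + 1) % (2 * n) = k + 1 := Nat.mod_eq_of_lt (by omega)
        rw [bip_even hn0 hm0 hk2, e1, bip_odd hn0 hm0 (by omega)]
        simp
      · have e2 : ((k + 1) % (2 * n)) % 2 = 0 := by
          rw [Nat.mod_mod_of_dvd _ ⟨n, rfl⟩]
          omega
        rw [bip_odd hn0 hm0 hk2, bip_even hn0 hm0 e2]
        simp
  · -- each arc covered exactly once
    intro u v huv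
    rcases u with i | j <;> rcases v with i' | j'
    · simp at huv
    · -- arc (inl i, inr j'')
      set c₀ : ℕ := (m + j'.val - i.val) % m with hc₀
      have hc₀m : c₀ < m := Nat.mod_lt _ hm0
      have hc₀j : (c₀ + i.val) % m = j'.val := hkey i.val j'.val i.isLt j'.isLt
      refine ⟨bipL n m c₀ hn0 hm0, ⟨Finset.mem_image_of_mem _ (Finset.mem_range.2 hc₀m), ?_⟩, ?_⟩
      · rw [mem_cycleArcs_bipL]
        refine ⟨2 * i.val, by omega, ?_⟩
        have e1 : (2 * i.val + 1) % (2 * n) = 2 * i.val + 1 := Nat.mod_eq_of_lt (by omega)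
        rw [e1, bip_even hn0 hm0 (by omega), bip_odd hn0 hm0 (by omega)]
        have e4 : 2 * i.val / 2 = i.val := by omega
        have e5 : (2 * i.val + 1) / 2 = i.val := by omega
        rw [e4, e5]
        simp [Prod.ext_iff, Fin.ext_iff, Nat.mod_eq_of_lt i.isLt, hc₀j]
      · rintro l ⟨hlC, hlmem⟩
        obtain ⟨c, hc, rfl⟩ := Finset.mem_image.1 hlC
        rw [Finset.mem_range] at hc
        rw [mem_cycleArcs_bipL] at hlmem
        obtain ⟨k, hk, hpk⟩ := hlmem
        by_cases hk2 : k % 2 = 0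
        · have e1 : (k + 1) % (2 * n) = k + 1 := Nat.mod_eq_of_lt (by omega)
          rw [e1, bip_even hn0 hm0 hk2, bip_odd hn0 hm0 (by omega)] at hpk
          simp only [Prod.mk.injEq, Sum.inl.injEq, Sum.inr.injEq, Fin.ext_iff] at hpk
          obtain ⟨hi, hj⟩ := hpk
          have e4 : k / 2 % n = k / 2 := Nat.mod_eq_of_lt (by omega)
          have e5 : (k + 1) / 2 = k / 2 := by omega
          rw [e4] at hi
          rw [e5, ← hi] at hj
          have : c = c₀ := hcancel i.val c c₀ hc hc₀m (by rw [← hj, hc₀j])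
          rw [this]
        · rw [bip_odd hn0 hm0 hk2] at hpk
          have := congrArg Prod.fst hpk
          simp at this
    · -- arc (inr j, inl i')
      set t₀ : ℕ := if i'.val = 0 then n - 1 else i'.val - 1 with ht₀
      have ht₀n : t₀ < n := by rw [ht₀]; split <;> omega
      set c₀ : ℕ := (m + j.val - t₀) % m with hc₀
      have hc₀m : c₀ < m := Nat.mod_lt _ hm0
      have hc₀j : (c₀ + t₀) % m = j.val := hkey t₀ j.val ht₀n j.isLt
      refine ⟨bipL n m c₀ hn0 hm0, ⟨Finset.mem_image_of_mem _ (Finset.mem_range.2 hc₀m), ?_⟩, ?_⟩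
      · rw [mem_cycleArcs_bipL]
        refine ⟨2 * t₀ + 1, by omega, ?_⟩
        have e5 : (2 * t₀ + 1) / 2 = t₀ := by omega
        by_cases hi0 : i'.val = 0
        · have e1 : (2 * t₀ + 1 + 1) % (2 * n) = 0 := by
            have h1 : 2 * t₀ + 1 + 1 = 2 * n := by
              rw [ht₀, if_pos hi0]; omega
            rw [h1, Nat.mod_self]
          rw [e1, bip_odd hn0 hm0 (by omega), bip_even hn0 hm0 (by norm_num), e5]
          simp [Prod.ext_iff, Fin.ext_iff, hc₀j, hi0, Nat.mod_eq_of_lt hn0]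
        · have e1 : (2 * t₀ + 1 + 1) % (2 * n) = 2 * i'.val := by
            have h1 : 2 * t₀ + 1 + 1 = 2 * i'.val := by
              rw [ht₀, if_neg hi0]; omega
            rw [h1]; exact Nat.mod_eq_of_lt (by omega)
          rw [e1, bip_odd hn0 hm0 (by omega), bip_even hn0 hm0 (by omega), e5]
          have e7 : 2 * i'.val / 2 = i'.val := by omega
          rw [e7]
          simp [Prod.ext_iff, Fin.ext_iff, hc₀j, Nat.mod_eq_of_lt i'.isLt]
      · rintro l ⟨hlC, hlmem⟩
        obtain ⟨c, hc, rfl⟩ := Finset.mem_image.1 hlC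
        rw [Finset.mem_range] at hc
        rw [mem_cycleArcs_bipL] at hlmem
        obtain ⟨k, hk, hpk⟩ := hlmem
        by_cases hk2 : k % 2 = 0
        · rw [bip_even hn0 hm0 hk2] at hpk
          have := congrArg Prod.fst hpk
          simp at this
        · have hsnd := congrArg Prod.snd hpk
          have hfst := congrArg Prod.fst hpk
          rw [bip_odd hn0 hm0 hk2] at hfst
          simp only at hfst hsnd
          have hj : j.val = (c + k / 2) % m := by
            simpa only [Sum.inr.injEq, Fin.ext_iff] using hfst
          have hteq : k / 2 = t₀ := by
            by_cases hend : k + 1 = 2 * n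
            · have e1 : (k + 1) % (2 * n) = 0 := by rw [hend, Nat.mod_self]
              rw [e1, bip_even hn0 hm0 (by norm_num)] at hsnd
              have hi : i'.val = 0 / 2 % n := by
                simpa only [Sum.inl.injEq, Fin.ext_iff] using hsnd
              have hi0 : i'.val = 0 := by simpa using hi
              rw [ht₀, if_pos hi0]
              omega
            · have hklt : k + 1 < 2 * n := by omega
              have e1 : (k + 1) % (2 * n) = k + 1 := Nat.mod_eq_of_lt hklt
              rw [e1, bip_even hn0 hm0 (by omega)] at hsnd
              have hi : i'.val = (k + 1) / 2 % n := by
                simpa only [Sum.inl.injEq, Fin.ext_iff] using hsnd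
              rw [Nat.mod_eq_of_lt (by omega)] at hi
              have hipos : ¬ (i'.val = 0) := by omega
              rw [ht₀, if_neg hipos]
              omega
          rw [hteq] at hj
          have : c = c₀ := hcancel t₀ c c₀ hc hc₀m (by rw [← hj, hc₀j])
          rw [this]
    · simp at huv
  · calc ((Finset.range m).image _).card ≤ (Finset.range m).card := Finset.card_image_le
      _ = m := Finset.card_range m
      _ ≤ Nat.card (Fin n ⊕ Fin m) - 1 := by
          simp only [Nat.card_eq_fintype_card, Fintype.card_sum, Fintype.card_fin]
          omega


/-- For all `n, m ≥ 2`, the complete bipartite graph `K_{n,m}` has an SOCDC. -/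
theorem hasSOCDC_completeBipartiteGraph (n m : ℕ) (hn : 2 ≤ n) (hm : 2 ≤ m) :
    HasSOCDC (completeBipartiteGraph (Fin n) (Fin m)) := by
  rcases le_total n m with h | h
  · exact aux_socdc n m hn h
  · refine hasSOCDC_of_iso (G := completeBipartiteGraph (Fin m) (Fin n)) ⟨Equiv.sumComm _ _, ?_⟩
      (aux_socdc m n hm h)
    intro a b
    cases a <;> cases b <;> simp
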